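/- Let (C, J) be a Grothendieck site whose category of sheaves of sets is replete. Then countable products of epimorphisms are epimorphisms: for any families of sheaves (F_n) and (G_n) indexed by ℕ and epimorphisms f_n : F_n → G_n for each n, the induced map ∏_n F_n → ∏_n G_n between the products is an epimorphism. -/

import Mathlib

universe v u

open CategoryTheory CategoryTheory.Limits Opposite

/-- The category of sheaves of sets on a site is *replete* if for every `ℕᵒᵖ`-indexed tower of
sheaves all of whose transition maps are epimorphisms, the projection from the limit of the tower
to each of its terms is an epimorphism. -/
def RepleteSheaves {C : Type u} [Category.{v} C] (J : GrothendieckTopology C) : Prop :=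
  ∀ F : ℕᵒᵖ ⥤ Sheaf J (Type max u v),
    (∀ n : ℕ, Epi (F.map (homOfLE (Nat.le_succ n)).op)) →
    ∀ (c : Cone F), IsLimit c → ∀ n : ℕ, Epi (c.π.app (op n))

namespace RepleteProdAux

variable {C : Type u} [Category.{v} C] {J : GrothendieckTopology C}

/-- A product of morphisms of sheaves which are isomorphisms except possibly at one
coordinate, where the morphism is an epimorphism, is an epimorphism. -/
lemma epi_pi_map_single {X Y : ℕ → Sheaf J (Type max u v)} (g : ∀ k, X k ⟶ Y k) (n : ℕ)
    (hiso : ∀ k, k ≠ n → IsIso (g k)) (hepi : Epi (g n)) :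
    Epi (Limits.Pi.map g) := by
  have hls : Sheaf.IsLocallySurjective (g n) := (Sheaf.isLocallySurjective_iff_epi _).2 hepi
  have : Sheaf.IsLocallySurjective (Limits.Pi.map g) := by
    constructor
    intro U s
    apply J.superset_covering _ (hls.imageSieve_mem ((Limits.Pi.π Y n).hom.app (op U) s))
    rintro V p ⟨x, hx⟩
    let E : Sheaf J (Type max u v) ⥤ Type max u v :=
      sheafToPresheaf J (Type max u v) ⋙ (evaluation Cᵒᵖ (Type max u v)).obj (op V)
    -- the family of components of the desired preimage
    let a : ∀ k, E.obj (X k) := fun k =>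
      if h : k = n then h ▸ x
      else
        haveI := hiso k h
        (inv (g k)).hom.app (op V) ((Limits.Pi.π Y k).hom.app (op V) ((∏ᶜ Y).val.map p.op s))
    let y : E.obj (∏ᶜ X) :=
      inv (piComparison E X) (Limits.Pi.lift (f := fun k => E.obj (X k)) (fun k => TypeCat.ofHom (fun b => b k)) a)
    have hpc : piComparison E X y =
        Limits.Pi.lift (f := fun k => E.obj (X k)) (fun k => TypeCat.ofHom (fun b => b k)) a := by
      exact ConcreteCategory.congr_hom (IsIso.inv_hom_id (piComparison E X)) _
    have hy : ∀ k, (Limits.Pi.π X k).hom.app (op V) y = a k := by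
      intro k
      have h1 := ConcreteCategory.congr_hom (piComparison_comp_π E X k) y
      rw [types_comp_apply, hpc] at h1
      have : E.map (Limits.Pi.π X k) y = a k := by rw [← h1]; simp
      exact this
    refine ⟨y, ?_⟩
    have hinj : Function.Injective (piComparison E Y) :=
      ((isIso_iff_bijective _).1 inferInstance).1
    apply hinj
    apply Types.limit_ext
    rintro ⟨k⟩
    have hcomp : ∀ (z : E.obj (∏ᶜ Y)),
        limit.π (Discrete.functor fun k => E.obj (Y k)) ⟨k⟩ (piComparison E Y z) =
          (Limits.Pi.π Y k).hom.app (op V) z := by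
      intro z
      exact ConcreteCategory.congr_hom (piComparison_comp_π E Y k) z
    rw [hcomp, hcomp]
    have hPiMap : Limits.Pi.map g ≫ Limits.Pi.π Y k = Limits.Pi.π X k ≫ g k := by simp
    have hL : (Limits.Pi.π Y k).hom.app (op V) ((Limits.Pi.map g).hom.app (op V) y) =
        (g k).hom.app (op V) ((Limits.Pi.π X k).hom.app (op V) y) :=
      ConcreteCategory.congr_hom (congr_arg (fun q : (∏ᶜ X ⟶ Y k) => q.hom.app (op V)) hPiMap) y
    have hR : (Limits.Pi.π Y k).hom.app (op V) ((∏ᶜ Y).val.map p.op s) =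
        (Y k).val.map p.op ((Limits.Pi.π Y k).hom.app (op U) s) :=
      ConcreteCategory.congr_hom ((Limits.Pi.π Y k).hom.naturality p.op) s
    refine hL.trans ?_
    rw [hy k]
    by_cases h : k = n
    · subst h
      have ha : a k = x := by simp [a]
      rw [ha]
      exact hx.trans hR.symm
    · haveI := hiso k h
      have ha : a k = (inv (g k)).hom.app (op V) ((Limits.Pi.π Y k).hom.app (op V)
          ((∏ᶜ Y).val.map p.op s)) := by simp [a, h]
      rw [ha]
      have hc : (g k).hom.app (op V) ((inv (g k)).hom.app (op V) ((Limits.Pi.π Y k).hom.app (op V)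
          ((∏ᶜ Y).val.map p.op s))) = (Limits.Pi.π Y k).hom.app (op V)
          ((∏ᶜ Y).val.map p.op s) :=
        ConcreteCategory.congr_hom (congr_arg (fun q : (Y k ⟶ Y k) => q.hom.app (op V)) (IsIso.inv_hom_id (g k))) _
      exact hc
  exact Sheaf.epi_of_isLocallySurjective' _

variable (F G : ℕ → Sheaf J (Type max u v)) (f : ∀ n, F n ⟶ G n)

/-- The `k`-th factor of the `n`-th stage of the tower. -/
def Xo (n k : ℕ) : Sheaf J (Type max u v) := if k < n then F k else G k

lemma Xo_eq_F {n k : ℕ} (h : k < n) : Xo F G n k = F k := if_pos h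
lemma Xo_eq_G {n k : ℕ} (h : ¬ k < n) : Xo F G n k = G k := if_neg h

/-- Transition maps of the factors of the tower. -/
def tmap (n k : ℕ) : Xo F G (n + 1) k ⟶ Xo F G n k :=
  if h : k < n then
    eqToHom (Xo_eq_F F G (Nat.lt_succ_of_lt h)) ≫ eqToHom (Xo_eq_F F G h).symm
  else if h' : k < n + 1 then
    eqToHom (Xo_eq_F F G h') ≫ f k ≫ eqToHom (Xo_eq_G F G h).symm
  else
    eqToHom (Xo_eq_G F G h') ≫ eqToHom (Xo_eq_G F G h).symm

lemma tmap_epi (hf : ∀ m, Epi (f m)) (n k : ℕ) : Epi (tmap F G f n k) := by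
  unfold tmap
  split_ifs with h h'
  · infer_instance
  · haveI := hf k
    infer_instance
  · infer_instance

lemma tmap_isIso (n k : ℕ) (h : k ≠ n) : IsIso (tmap F G f n k) := by
  unfold tmap
  split_ifs with h1 h2
  · infer_instance
  · omega
  · infer_instance

/-- The tower of products. -/
noncomputable def tower : ℕᵒᵖ ⥤ Sheaf J (Type max u v) :=
  Functor.ofOpSequence (X := fun n => ∏ᶜ Xo F G n) (fun n => Limits.Pi.map (tmap F G f n))

lemma tower_map_succ (n : ℕ) :
    (tower F G f).map (homOfLE (Nat.le_succ n)).op = Limits.Pi.map (tmap F G f n) :=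
  Functor.ofOpSequence_map_homOfLE_succ _ n

lemma tower_map_epi (hf : ∀ m, Epi (f m)) (n : ℕ) :
    Epi ((tower F G f).map (homOfLE (Nat.le_succ n)).op) := by
  rw [tower_map_succ]
  exact epi_pi_map_single _ n (fun k hk => tmap_isIso F G f n k hk) (by
    have := tmap_epi F G f hf n n
    exact this)

/-- The map from `F k` to the `k`-th factor of the `n`-th stage. -/
def cmc (n k : ℕ) : F k ⟶ Xo F G n k :=
  if h : k < n then eqToHom (Xo_eq_F F G h).symm
  else f k ≫ eqToHom (Xo_eq_G F G h).symm

lemma cmc_tmap (n k : ℕ) : cmc F G f (n + 1) k ≫ tmap F G f n k = cmc F G f n k := by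
  rcases lt_trichotomy k n with h | h | h
  · rw [cmc, dif_pos (Nat.lt_succ_of_lt h), tmap, dif_pos h, cmc, dif_pos h]
    simp
  · subst h
    rw [cmc, dif_pos (Nat.lt_succ_self k), tmap, dif_neg (lt_irrefl k),
      dif_pos (Nat.lt_succ_self k), cmc, dif_neg (lt_irrefl k)]
    simp
  · rw [cmc, dif_neg (by omega), tmap, dif_neg (by omega), dif_neg (by omega),
      cmc, dif_neg (by omega)]
    simp

/-- The cone over the tower with apex the product of the `F k`. -/
noncomputable def towerCone (cF : Cone (Discrete.functor F)) : Cone (tower F G f) where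
  pt := cF.pt
  π := NatTrans.ofOpSequence
    (fun n => (Limits.Pi.lift (fun k => cF.π.app ⟨k⟩ ≫ cmc F G f n k) :
      cF.pt ⟶ ∏ᶜ Xo F G n)) (by
    intro n
    rw [show (tower F G f).map (homOfLE (n.le_add_right 1)).op = Limits.Pi.map (tmap F G f n)
      from Functor.ofOpSequence_map_homOfLE_succ _ n]
    simp only [Functor.const_obj_obj, Functor.const_obj_map, Category.id_comp]
    apply Limits.Pi.hom_ext
    intro k
    erw [Category.id_comp, Category.assoc, Limits.Pi.map_π, Limits.Pi.lift_π, ← Category.assoc, Limits.Pi.lift_π]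
    simp [cmc_tmap F G f n k])

section

variable {F G f} (s : Cone (tower F G f))

/-- Components of a cone over the tower. -/
noncomputable def qq (m k : ℕ) : s.pt ⟶ Xo F G m k :=
  s.π.app (op m) ≫ Limits.Pi.π _ k

lemma qq_succ (m k : ℕ) : qq s (m + 1) k ≫ tmap F G f m k = qq s m k := by
  have h := s.w (homOfLE (Nat.le_succ m)).op
  rw [show (tower F G f).map (homOfLE (Nat.le_succ m)).op = Limits.Pi.map (tmap F G f m) from
    Functor.ofOpSequence_map_homOfLE_succ _ m] at h
  rw [qq, qq, ← h]
  erw [Category.assoc, Category.assoc, Limits.Pi.map_π]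
  rfl

lemma qq_high (k d m : ℕ) (hm : k + 1 + d = m) :
    qq s m k ≫ eqToHom ((Xo_eq_F F G (by omega)).trans
      (Xo_eq_F F G (Nat.lt_succ_self k)).symm) = qq s (k + 1) k := by
  induction d generalizing m with
  | zero =>
    obtain rfl : m = k + 1 := by omega
    simp
  | succ d ih =>
    obtain rfl : m = (k + 1 + d) + 1 := by omega
    have h1 := qq_succ s (k + 1 + d) k
    rw [show tmap F G f (k + 1 + d) k = eqToHom (Xo_eq_F F G (by omega)) ≫
      eqToHom (Xo_eq_F F G (by omega)).symm from dif_pos (by omega)] at h1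
    rw [← ih (k + 1 + d) rfl, ← h1]
    simp [eqToHom_trans]

lemma qq_low (k d m : ℕ) (hm : m + d = k) :
    qq s (k + 1) k ≫ eqToHom (Xo_eq_F F G (Nat.lt_succ_self k)) ≫ f k ≫
      eqToHom (Xo_eq_G F G (by omega : ¬ k < m)).symm = qq s m k := by
  induction d generalizing m with
  | zero =>
    obtain rfl : m = k := by omega
    have h1 := qq_succ s m m
    rw [show tmap F G f m m = eqToHom (Xo_eq_F F G (Nat.lt_succ_self m)) ≫ f m ≫
      eqToHom (Xo_eq_G F G (lt_irrefl m)).symm from by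
        rw [tmap, dif_neg (lt_irrefl m), dif_pos (Nat.lt_succ_self m)]] at h1
    exact h1
  | succ d ih =>
    have h1 := qq_succ s m k
    rw [show tmap F G f m k = eqToHom (Xo_eq_G F G (by omega)) ≫
      eqToHom (Xo_eq_G F G (by omega)).symm from by
        rw [tmap, dif_neg (by omega), dif_neg (by omega)]] at h1
    rw [← h1, ← ih (m + 1) (by omega)]
    simp [eqToHom_trans]

lemma qq_cmc (n k : ℕ) :
    (qq s (k + 1) k ≫ eqToHom (Xo_eq_F F G (Nat.lt_succ_self k))) ≫ cmc F G f n k =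
      qq s n k := by
  by_cases h : k < n
  · have H := qq_high s k (n - (k + 1)) n (by omega)
    rw [cmc, dif_pos h, ← H]
    simp
  · have H := qq_low s k (k - n) n (by omega)
    rw [cmc, dif_neg h, ← H]
    simp

end

/-- The cone over the tower is a limit cone whenever its apex is a product of the `F k`. -/
noncomputable def towerConeIsLimit (cF : Cone (Discrete.functor F)) (hF : IsLimit cF) :
    IsLimit (towerCone F G f cF) where
  lift s := hF.lift (Fan.mk s.pt
    (fun k => qq s (k + 1) k ≫ eqToHom (Xo_eq_F F G (Nat.lt_succ_self k))))
  fac s := by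
    rintro ⟨n⟩
    apply Limits.Pi.hom_ext
    intro k
    have h1 : (towerCone F G f cF).π.app (op n) ≫ Limits.Pi.π (Xo F G n) k =
        cF.π.app ⟨k⟩ ≫ cmc F G f n k := by
      exact Limits.Pi.lift_π (fun k => cF.π.app ⟨k⟩ ≫ cmc F G f n k) k
    erw [Category.assoc, h1, ← Category.assoc]
    have h2 : hF.lift (Fan.mk s.pt
        (fun k => qq s (k + 1) k ≫ eqToHom (Xo_eq_F F G (Nat.lt_succ_self k)))) ≫
        cF.π.app ⟨k⟩ = qq s (k + 1) k ≫ eqToHom (Xo_eq_F F G (Nat.lt_succ_self k)) :=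
      hF.fac _ ⟨k⟩
    erw [h2]
    exact qq_cmc s n k
  uniq s m hm := by
    apply hF.hom_ext
    rintro ⟨k⟩
    have h2 : hF.lift (Fan.mk s.pt
        (fun k => qq s (k + 1) k ≫ eqToHom (Xo_eq_F F G (Nat.lt_succ_self k)))) ≫
        cF.π.app ⟨k⟩ = qq s (k + 1) k ≫ eqToHom (Xo_eq_F F G (Nat.lt_succ_self k)) :=
      hF.fac _ ⟨k⟩
    rw [h2]
    have h3 := hm (op (k + 1))
    have h4 : (towerCone F G f cF).π.app (op (k + 1)) ≫ Limits.Pi.π (Xo F G (k + 1)) k =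
        cF.π.app ⟨k⟩ ≫ cmc F G f (k + 1) k := by
      exact Limits.Pi.lift_π (fun j => cF.π.app ⟨j⟩ ≫ cmc F G f (k + 1) j) k
    have h5 : m ≫ cF.π.app ⟨k⟩ ≫ cmc F G f (k + 1) k = qq s (k + 1) k := by
      erw [← h4, qq, ← Category.assoc, h3]
    rw [cmc, dif_pos (Nat.lt_succ_self k)] at h5
    rw [← h5]
    erw [Category.assoc, Category.assoc, eqToHom_trans, eqToHom_refl, Category.comp_id]
    rfl

end RepleteProdAux

open RepleteProdAux in
/-- In a replete topos of sheaves, a countable product of epimorphisms is an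
epimorphism. -/
theorem replete_countable_prod_epi {C : Type u} [Category.{v} C] (J : GrothendieckTopology C)
    (hrep : RepleteSheaves J)
    (F G : ℕ → Sheaf J (Type max u v)) (f : ∀ n, F n ⟶ G n) (hf : ∀ n, Epi (f n))
    (cF : Cone (Discrete.functor F)) (hF : IsLimit cF)
    (cG : Cone (Discrete.functor G)) (hG : IsLimit cG) :
    Epi (IsLimit.map cF hG (Discrete.natTrans fun n => f n.as)) := by
  have htw : ∀ n, Epi ((tower F G f).map (homOfLE (Nat.le_succ n)).op) :=
    tower_map_epi F G f hf
  have h0 := hrep (tower F G f) htw (towerCone F G f cF)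
    (towerConeIsLimit F G f cF hF) 0
  let e : (∏ᶜ Xo F G 0 : Sheaf J (Type max u v)) ⟶ cG.pt :=
    hG.lift (Fan.mk _ (fun k => Limits.Pi.π _ k ≫ eqToHom (Xo_eq_G F G (Nat.not_lt_zero k))))
  have hefac : ∀ k : ℕ, e ≫ cG.π.app ⟨k⟩ =
      Limits.Pi.π (Xo F G 0) k ≫ eqToHom (Xo_eq_G F G (Nat.not_lt_zero k)) :=
    fun k => hG.fac _ ⟨k⟩
  have he : IsIso e := by
    refine ⟨Limits.Pi.lift (fun k => cG.π.app ⟨k⟩ ≫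
      eqToHom (Xo_eq_G F G (Nat.not_lt_zero k)).symm), ?_, ?_⟩
    · apply Limits.Pi.hom_ext
      intro k
      rw [Category.assoc, Limits.Pi.lift_π, ← Category.assoc, hefac k]
      simp
    · apply hG.hom_ext
      rintro ⟨k⟩
      rw [Category.assoc, hefac k, ← Category.assoc, Limits.Pi.lift_π]
      simp
  have key : IsLimit.map cF hG (Discrete.natTrans fun n => f n.as) =
      (towerCone F G f cF).π.app (op 0) ≫ e := by
    apply hG.hom_ext
    rintro ⟨k⟩
    erw [IsLimit.map_π, Category.assoc, hefac k]
    have h2 : (towerCone F G f cF).π.app (op 0) ≫ Limits.Pi.π (Xo F G 0) k =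
        cF.π.app ⟨k⟩ ≫ cmc F G f 0 k := by
      exact Limits.Pi.lift_π (fun k => cF.π.app ⟨k⟩ ≫ cmc F G f 0 k) k
    erw [← Category.assoc, h2, cmc, dif_neg (Nat.not_lt_zero k)]
    simp
    exact (congrArg (fun t => cF.π.app ⟨k⟩ ≫ t) (Category.comp_id (f k))).symm
  rw [key]
  exact @epi_comp _ _ _ _ _ _ h0 _ (@IsIso.epi_of_iso _ _ _ _ e he)
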